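/- For 2 ≤ k ≤ 7 and all integers n ≥ 0, q_k(n) = ⌊((k−1)/(2k))·n²⌋, where q_k(n) = ((k−1)/(2k))(n²−s²) + s(s−1)/2 with s ≡ n (mod k), 0 ≤ s < k. Moreover, for every k ≥ 8 there exists n with q_k(n) ≠ ⌊((k−1)/(2k))·n²⌋. -/

import Mathlib

/-- `q_k(n) = ((k−1)/(2k))(n²−s²) + s(s−1)/2` with `s = n mod k`, as a rational number. -/
def qkQ (k n : ℤ) : ℚ :=
  ((k : ℚ) - 1) / (2 * (k : ℚ)) * ((n : ℚ)^2 - ((n % k : ℤ) : ℚ)^2) +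
    ((n % k : ℤ) : ℚ) * (((n % k : ℤ) : ℚ) - 1) / 2

lemma qkQ_key (k n : ℤ) (hk : 2 ≤ k)
    (hs : (n % k) * (k - n % k) < 2 * k) :
    qkQ k n = ((⌊((k : ℚ) - 1) / (2 * (k : ℚ)) * (n : ℚ)^2⌋ : ℤ) : ℚ) := by
  have hkpos : (0:ℤ) < k := by linarith
  set s : ℤ := n % k with hsdef
  set q : ℤ := n / k with hqdef
  have hn' : n = k * q + s := by
    rw [hsdef, hqdef]; exact (Int.mul_ediv_add_emod n k).symm
  have hs0 : 0 ≤ s := Int.emod_nonneg n (by linarith)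
  have hs1 : s < k := Int.emod_lt_of_pos n hkpos
  -- qkQ is an integer m
  have heven : Even ((k - 1) * q * (k * q + 2 * s) + s * (s - 1)) := by
    have h1 : Even ((k - 1) * k) := by simpa using Int.even_mul_succ_self (k - 1)
    have h2 : Even ((s - 1) * s) := by simpa using Int.even_mul_succ_self (s - 1)
    obtain ⟨a, ha⟩ := h1
    obtain ⟨b, hb⟩ := h2
    exact ⟨a * q ^ 2 + (k - 1) * q * s + b, by nlinarith [ha, hb]⟩
  obtain ⟨m, hm⟩ := heven
  have hm' : (k - 1) * q * (k * q + 2 * s) + s * (s - 1) = 2 * m := by linarith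
  have hk0 : (k:ℚ) ≠ 0 := by positivity
  have hmQ : ((k:ℚ) - 1) * q * (k * q + 2 * s) + s * (s - 1) = 2 * m := by
    exact_mod_cast congrArg (Int.cast : ℤ → ℚ) hm'
  have hnQ : (n:ℚ) = k * q + s := by exact_mod_cast congrArg (Int.cast : ℤ → ℚ) hn'
  have hqkQ : qkQ k n = (m : ℚ) := by
    rw [qkQ, ← hsdef]
    rw [hnQ]
    field_simp
    linear_combination (k:ℚ) * hmQ
  -- the floor equals m
  have hx : ((k : ℚ) - 1) / (2 * (k : ℚ)) * (n : ℚ)^2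
      = (m : ℚ) + (s : ℚ) * ((k:ℚ) - s) / (2 * k) := by
    rw [hnQ]
    field_simp
    linear_combination (k:ℚ) * hmQ
  have hfrac0 : (0:ℚ) ≤ (s : ℚ) * ((k:ℚ) - s) / (2 * k) := by
    have h1 : (0:ℚ) ≤ (s:ℚ) := by exact_mod_cast hs0
    have h2 : (0:ℚ) < (k:ℚ) - s := by
      have : (s:ℚ) < k := by exact_mod_cast hs1
      linarith
    have h3 : (0:ℚ) < (k:ℚ) := by exact_mod_cast hkpos
    positivity
  have hfrac1 : (s : ℚ) * ((k:ℚ) - s) / (2 * k) < 1 := by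
    have h3 : (0:ℚ) < 2 * (k:ℚ) := by
      have : (0:ℚ) < (k:ℚ) := by exact_mod_cast hkpos
      linarith
    rw [div_lt_one h3]
    exact_mod_cast hs
  have hfloor : ⌊((k : ℚ) - 1) / (2 * (k : ℚ)) * (n : ℚ)^2⌋ = m := by
    rw [Int.floor_eq_iff, hx]
    constructor
    · linarith
    · linarith
  rw [hfloor, hqkQ]

theorem stmt_15 :
    (∀ k : ℤ, 2 ≤ k → k ≤ 7 → ∀ n : ℤ, 0 ≤ n →
      qkQ k n = ((⌊((k : ℚ) - 1) / (2 * (k : ℚ)) * (n : ℚ)^2⌋ : ℤ) : ℚ)) ∧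
    (∀ k : ℤ, 8 ≤ k → ∃ n : ℤ, 0 ≤ n ∧
      qkQ k n ≠ ((⌊((k : ℚ) - 1) / (2 * (k : ℚ)) * (n : ℚ)^2⌋ : ℤ) : ℚ)) := by
  constructor
  · intro k hk2 hk7 n hn
    apply qkQ_key k n hk2
    have hs0 : 0 ≤ n % k := Int.emod_nonneg n (by linarith)
    have hs1 : n % k < k := Int.emod_lt_of_pos n (by linarith)
    nlinarith [sq_nonneg (2 * (n % k) - k)]
  · intro k hk
    refine ⟨4, by norm_num, ?_⟩
    have hmod : (4 : ℤ) % k = 4 := Int.emod_eq_of_lt (by norm_num) (by linarith)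
    have hkQ : (8:ℚ) ≤ (k:ℚ) := by exact_mod_cast hk
    have hk0 : (0:ℚ) < (k:ℚ) := by linarith
    have hq : qkQ k 4 = 6 := by
      rw [qkQ, hmod]
      norm_num
    have hx : ((k : ℚ) - 1) / (2 * (k : ℚ)) * ((4:ℤ) : ℚ)^2 = 8 - 8 / k := by
      field_simp; ring
    have hfloor : ⌊((k : ℚ) - 1) / (2 * (k : ℚ)) * ((4:ℤ) : ℚ)^2⌋ = 7 := by
      rw [hx, Int.floor_eq_iff]
      constructor
      · have : (8:ℚ) / k ≤ 1 := (div_le_one hk0).mpr (by linarith)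
        push_cast; linarith
      · have : (0:ℚ) < 8 / k := by positivity
        push_cast; linarith
    rw [hq, hfloor]
    norm_num
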